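/- arXiv:2504.04134 — 5 statements merged into one kernel-verified Lean document; each statement's English description precedes it below -/
import Mathlib

section
/- Let G be a finite group and let ρ : G → U(d) be an irreducible unitary representation of G on ℂ^d (given as a monoid homomorphism from G to the unitary group of d × d complex matrices whose associated representation has no nontrivial invariant subspace). Then for all indices i, j, i', j' ∈ {1, …, d} one has (1/|G|) · Σ_{g ∈ G} ρ(g)_{ij} · conj(ρ(g)_{i'j'}) = 1/d if i = i' and j = j', and = 0 otherwise. -/
open scoped ComplexConjugate

/-- A matrix representation (valued in unitary matrices) is irreducible if the corresponding
module `ℂ^d` has no invariant subspace other than `⊥` and `⊤`. -/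
def IsIrreducibleUnitaryRep {G : Type*} [Group G] {d : ℕ}
    (ρ : G →* Matrix.unitaryGroup (Fin d) ℂ) : Prop :=
  ∀ W : Submodule ℂ (Fin d → ℂ),
    (∀ g : G, ∀ v ∈ W, (ρ g : Matrix (Fin d) (Fin d) ℂ).mulVec v ∈ W) →
    W = ⊥ ∨ W = ⊤

/-- Schur's lemma: a matrix commuting with all `ρ g` is scalar. -/
lemma schur_scalar {G : Type*} [Group G] {d : ℕ} (hd : 0 < d)
    (ρ : G →* Matrix.unitaryGroup (Fin d) ℂ) (hirr : IsIrreducibleUnitaryRep ρ)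
    (T : Matrix (Fin d) (Fin d) ℂ)
    (hT : ∀ g : G, (ρ g : Matrix (Fin d) (Fin d) ℂ) * T = T * (ρ g : Matrix (Fin d) (Fin d) ℂ)) :
    ∃ c : ℂ, T = c • (1 : Matrix (Fin d) (Fin d) ℂ) := by
  haveI : NeZero d := ⟨hd.ne'⟩
  haveI : Nontrivial (Fin d → ℂ) := by
    refine ⟨0, fun k => 1, ?_⟩
    intro h
    have := congrFun h ⟨0, hd⟩
    simp at this
  obtain ⟨c, hc⟩ := Module.End.exists_eigenvalue (Matrix.mulVecLin T)
  obtain ⟨v, hv⟩ := hc.exists_hasEigenvector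
  refine ⟨c, ?_⟩
  set S : Matrix (Fin d) (Fin d) ℂ := T - c • 1 with hS
  set W : Submodule ℂ (Fin d → ℂ) := LinearMap.ker (Matrix.mulVecLin S) with hW
  have hSv : v ∈ W := by
    simp only [hW, LinearMap.mem_ker, hS, Matrix.mulVecLin_apply, Matrix.sub_mulVec,
      Matrix.smul_mulVec, Matrix.one_mulVec]
    have := hv.apply_eq_smul
    simp only [Matrix.mulVecLin_apply] at this
    rw [this]
    simp
  have hScomm : ∀ g : G, (ρ g : Matrix (Fin d) (Fin d) ℂ) * S = S * (ρ g : Matrix (Fin d) (Fin d) ℂ) := by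
    intro g
    simp only [hS, mul_sub, sub_mul, hT g, Matrix.mul_smul, Matrix.smul_mul, mul_one, one_mul]
  have hinv : ∀ g : G, ∀ w ∈ W, (ρ g : Matrix (Fin d) (Fin d) ℂ).mulVec w ∈ W := by
    intro g w hw
    simp only [hW, LinearMap.mem_ker, Matrix.mulVecLin_apply] at hw ⊢
    rw [Matrix.mulVec_mulVec, ← hScomm g, ← Matrix.mulVec_mulVec, hw, Matrix.mulVec_zero]
  rcases hirr W hinv with hbot | htop
  · exact absurd (hbot ▸ hSv) (by simpa using hv.2)
  · have : S = 0 := by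
      ext a b
      have : S.mulVec (Pi.single b 1) = 0 := by
        have : (Pi.single b 1 : Fin d → ℂ) ∈ W := htop ▸ Submodule.mem_top
        simpa [hW, Matrix.mulVecLin_apply] using this
      have := congrFun this a
      simpa [Matrix.mulVec_single] using this
    have := sub_eq_zero.mp this
    exact this

/-- Schur orthogonality relations for the matrix entries of a single irreducible
unitary representation. -/
theorem schur_orthogonality_entries_self {G : Type*} [Group G] [Fintype G] {d : ℕ}
    (ρ : G →* Matrix.unitaryGroup (Fin d) ℂ) (hirr : IsIrreducibleUnitaryRep ρ)
    (i j i' j' : Fin d) :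
    (1 / (Fintype.card G : ℂ)) *
      ∑ g : G, (ρ g : Matrix (Fin d) (Fin d) ℂ) i j *
        conj ((ρ g : Matrix (Fin d) (Fin d) ℂ) i' j') =
    if i = i' ∧ j = j' then 1 / (d : ℂ) else 0 := by
  have hd : 0 < d := i.pos
  have hdC : (d : ℂ) ≠ 0 := Nat.cast_ne_zero.mpr hd.ne'
  have hcard : (Fintype.card G : ℂ) ≠ 0 := Nat.cast_ne_zero.mpr Fintype.card_ne_zero
  have hmul : ∀ a b : G, (ρ (a * b) : Matrix (Fin d) (Fin d) ℂ)
      = (ρ a : Matrix (Fin d) (Fin d) ℂ) * (ρ b : Matrix (Fin d) (Fin d) ℂ) := by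
    intro a b; rw [map_mul]; rfl
  have hone : (ρ (1 : G) : Matrix (Fin d) (Fin d) ℂ) = 1 := by rw [map_one]; rfl
  set E : Matrix (Fin d) (Fin d) ℂ := Matrix.single j j' (1 : ℂ) with hE
  set M : Matrix (Fin d) (Fin d) ℂ :=
    (Fintype.card G : ℂ)⁻¹ • ∑ g : G,
      (ρ g : Matrix (Fin d) (Fin d) ℂ) * E * (ρ g⁻¹ : Matrix (Fin d) (Fin d) ℂ) with hM
  have hsum : ∀ h : G,
      (ρ h : Matrix (Fin d) (Fin d) ℂ) *
        (∑ g : G, (ρ g : Matrix (Fin d) (Fin d) ℂ) * E * (ρ g⁻¹ : Matrix (Fin d) (Fin d) ℂ))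
      = (∑ g : G, (ρ g : Matrix (Fin d) (Fin d) ℂ) * E * (ρ g⁻¹ : Matrix (Fin d) (Fin d) ℂ)) *
        (ρ h : Matrix (Fin d) (Fin d) ℂ) := by
    intro h
    rw [Finset.mul_sum, Finset.sum_mul]
    refine Fintype.sum_equiv (Equiv.mulLeft h) _ _ fun g => ?_
    have hcancel : (ρ h⁻¹ : Matrix (Fin d) (Fin d) ℂ) * (ρ h : Matrix (Fin d) (Fin d) ℂ) = 1 := by
      rw [← hmul, inv_mul_cancel, hone]
    show (ρ h : Matrix (Fin d) (Fin d) ℂ) *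
        ((ρ g : Matrix (Fin d) (Fin d) ℂ) * E * (ρ g⁻¹ : Matrix (Fin d) (Fin d) ℂ))
      = (ρ (h * g) : Matrix (Fin d) (Fin d) ℂ) * E * (ρ ((h * g)⁻¹) : Matrix (Fin d) (Fin d) ℂ) *
        (ρ h : Matrix (Fin d) (Fin d) ℂ)
    rw [hmul h g, mul_inv_rev, hmul g⁻¹ h⁻¹]
    simp only [mul_assoc, hcancel, mul_one]
  have hMcomm : ∀ h : G, (ρ h : Matrix (Fin d) (Fin d) ℂ) * M
      = M * (ρ h : Matrix (Fin d) (Fin d) ℂ) := by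
    intro h
    rw [hM, Matrix.mul_smul, Matrix.smul_mul, hsum h]
  obtain ⟨c, hc⟩ := schur_scalar hd ρ hirr M hMcomm
  -- trace computation
  have htraceM : M.trace = E.trace := by
    rw [hM, Matrix.trace_smul]
    have : ∀ g : G, ((ρ g : Matrix (Fin d) (Fin d) ℂ) * E *
        (ρ g⁻¹ : Matrix (Fin d) (Fin d) ℂ)).trace = E.trace := by
      intro g
      rw [Matrix.trace_mul_cycle, ← hmul, inv_mul_cancel, hone, one_mul]
    rw [Matrix.trace_sum]
    simp only [this, Finset.sum_const, Finset.card_univ, nsmul_eq_mul, smul_eq_mul]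
    field_simp
  have htraceE : E.trace = if j = j' then 1 else 0 := by
    by_cases hjj : j = j'
    · subst hjj; simp [hE]
    · simp only [hE, Matrix.trace, Matrix.diag, Matrix.single, Matrix.of_apply, hjj,
        if_false]
      refine Finset.sum_eq_zero fun k _ => ?_
      rw [if_neg]
      rintro ⟨rfl, rfl⟩
      exact hjj rfl
  have hcval : c = (if j = j' then 1 else 0) / (d : ℂ) := by
    have h1 : M.trace = c * d := by
      rw [hc, Matrix.trace_smul, Matrix.trace_one]
      simp [smul_eq_mul]
    rw [htraceM, htraceE] at h1
    rw [eq_div_iff hdC]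
    exact h1.symm
  -- entry computation
  have hstar : ∀ g : G, (ρ g⁻¹ : Matrix (Fin d) (Fin d) ℂ)
      = star (ρ g : Matrix (Fin d) (Fin d) ℂ) := by
    intro g; rw [map_inv]; rfl
  have hentry : ∀ g : G, ((ρ g : Matrix (Fin d) (Fin d) ℂ) * E *
      (ρ g⁻¹ : Matrix (Fin d) (Fin d) ℂ)) i i'
      = (ρ g : Matrix (Fin d) (Fin d) ℂ) i j * conj ((ρ g : Matrix (Fin d) (Fin d) ℂ) i' j') := by
    intro g
    rw [hstar g, hE, mul_assoc, Matrix.mul_apply, Finset.sum_eq_single j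
      (fun k _ hk => by rw [Matrix.single_mul_apply_of_ne _ _ _ _ _ hk, mul_zero])
      (fun hj => absurd (Finset.mem_univ j) hj)]
    rw [Matrix.single_mul_apply_same, one_mul, Matrix.star_apply, starRingEnd_apply]
  have hMentry : M i i' = (1 / (Fintype.card G : ℂ)) *
      ∑ g : G, (ρ g : Matrix (Fin d) (Fin d) ℂ) i j *
        conj ((ρ g : Matrix (Fin d) (Fin d) ℂ) i' j') := by
    rw [hM]
    simp only [Matrix.smul_apply, Matrix.sum_apply, smul_eq_mul, one_div]
    congr 1
    exact Finset.sum_congr rfl fun g _ => hentry g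
  rw [← hMentry, hc, hcval]
  by_cases hii : i = i'
  · subst hii
    by_cases hjj : j = j' <;> simp [hjj, Matrix.one_apply]
  · simp [hii, Matrix.one_apply, Matrix.smul_apply]
end

section
/- Let G be a finite group, let α : G → ℂ be a class function (α(g g' g⁻¹) = α(g') for all g, g' ∈ G), and let A be the adjacency matrix of the Cayley color graph Γ(G; α), i.e. A(x, y) = α(y · x⁻¹). Let ρ : G → U(d) be an irreducible unitary representation with character χ. Then for every 1 ≤ i, j ≤ d, the vector v_{ij} ∈ ℂ^G defined by v_{ij}(g) = ρ(g)_{ij} satisfies A · v_{ij} = λ · v_{ij}, where λ = (1/d) · Σ_{g ∈ G} α(g) χ(g). -/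
/-- For a class function `α`, the matrix-entry functions `v_{i j}(g) = ρ(g)_{i j}` of an
irreducible unitary representation `ρ` with character `χ` are eigenvectors of the adjacency
matrix `A(x,y) = α (y * x⁻¹)` of the Cayley color graph `Γ(G; α)`, with eigenvalue
`λ = (1/d) ∑_g α(g) χ(g)`. -/
theorem cayley_adj_eigenvector_of_classFunction {G : Type*} [Group G] [Fintype G]
    (α : G → ℂ) (hα : ∀ g g' : G, α (g * g' * g⁻¹) = α g')
    {d : ℕ} (ρ : G →* Matrix.unitaryGroup (Fin d) ℂ) (hirr : IsIrreducibleUnitaryRep ρ)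
    (i j : Fin d) :
    (Matrix.of fun x y : G => α (y * x⁻¹)).mulVec
        (fun g : G => (ρ g : Matrix (Fin d) (Fin d) ℂ) i j) =
      ((1 / (d : ℂ)) * ∑ g : G, α g * Matrix.trace (ρ g : Matrix (Fin d) (Fin d) ℂ)) •
        (fun g : G => (ρ g : Matrix (Fin d) (Fin d) ℂ) i j) := by
  classical
  set M : Matrix (Fin d) (Fin d) ℂ := ∑ g : G, α g • (ρ g : Matrix (Fin d) (Fin d) ℂ) with hM
  have hd : (d : ℂ) ≠ 0 := by
    have : 0 < d := i.pos
    exact_mod_cast this.ne'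
  have hmul : ∀ a b : G, ((ρ (a * b) : Matrix (Fin d) (Fin d) ℂ))
      = (ρ a : Matrix (Fin d) (Fin d) ℂ) * (ρ b : Matrix (Fin d) (Fin d) ℂ) := by
    intro a b; rw [map_mul]; rfl
  have hcomm : ∀ h : G, (ρ h : Matrix (Fin d) (Fin d) ℂ) * M
      = M * (ρ h : Matrix (Fin d) (Fin d) ℂ) := by
    intro h
    rw [hM, Finset.mul_sum, Finset.sum_mul]
    refine Fintype.sum_equiv ((Equiv.mulLeft h).trans (Equiv.mulRight h⁻¹)) _ _ ?_
    intro g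
    simp only [Equiv.trans_apply, Equiv.coe_mulLeft, Equiv.coe_mulRight]
    rw [hα h g, Matrix.mul_smul, Matrix.smul_mul, ← hmul, ← hmul]
    congr 2
    group
  -- Schur's lemma
  haveI : Nonempty (Fin d) := ⟨i⟩
  haveI : Nontrivial (Fin d → ℂ) := inferInstance
  obtain ⟨c, hc⟩ := Module.End.exists_eigenvalue (M.mulVecLin : Module.End ℂ (Fin d → ℂ))
  obtain ⟨v, hv⟩ := hc.exists_hasEigenvector
  have hW : (Module.End.eigenspace (M.mulVecLin : Module.End ℂ (Fin d → ℂ)) c) = ⊤ := by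
    have hinv : ∀ g : G, ∀ w ∈ Module.End.eigenspace (M.mulVecLin : Module.End ℂ (Fin d → ℂ)) c,
        (ρ g : Matrix (Fin d) (Fin d) ℂ).mulVec w ∈
          Module.End.eigenspace (M.mulVecLin : Module.End ℂ (Fin d → ℂ)) c := by
      intro g w hw
      rw [Module.End.mem_eigenspace_iff] at hw ⊢
      simp only [Matrix.mulVecLin_apply] at hw ⊢
      rw [Matrix.mulVec_mulVec, ← hcomm, ← Matrix.mulVec_mulVec, hw, Matrix.mulVec_smul]
    rcases hirr _ hinv with h | h
    · have hv1 : v ∈ Module.End.eigenspace (M.mulVecLin : Module.End ℂ (Fin d → ℂ)) c := hv.1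
      rw [h, Submodule.mem_bot] at hv1
      exact absurd hv1 hv.2
    · exact h
  have hMc : M = c • (1 : Matrix (Fin d) (Fin d) ℂ) := by
    ext a b
    have : (Pi.single b 1 : Fin d → ℂ) ∈
        Module.End.eigenspace (M.mulVecLin : Module.End ℂ (Fin d → ℂ)) c := hW ▸ trivial
    rw [Module.End.mem_eigenspace_iff] at this
    have := congrFun this a
    simpa [Matrix.mulVec_single, Matrix.one_apply, Pi.single_apply, mul_comm] using this
  -- identify c with the eigenvalue
  have htr : Matrix.trace M = c * d := by
    rw [hMc]; simp [Matrix.trace_smul, Matrix.trace_one, mul_comm]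
  have hceq : c = (1 / (d : ℂ)) * ∑ g : G, α g * Matrix.trace (ρ g : Matrix (Fin d) (Fin d) ℂ) := by
    have : Matrix.trace M = ∑ g : G, α g * Matrix.trace (ρ g : Matrix (Fin d) (Fin d) ℂ) := by
      rw [hM, Matrix.trace_sum]
      simp [Matrix.trace_smul, smul_eq_mul]
    rw [this] at htr
    rw [htr]
    field_simp
  funext x
  have key : (M * (ρ x : Matrix (Fin d) (Fin d) ℂ)) i j
      = c * (ρ x : Matrix (Fin d) (Fin d) ℂ) i j := by
    rw [hMc, Matrix.smul_mul, Matrix.one_mul]; rfl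
  calc (Matrix.of fun x y : G => α (y * x⁻¹)).mulVec
        (fun g : G => (ρ g : Matrix (Fin d) (Fin d) ℂ) i j) x
      = ∑ y : G, α (y * x⁻¹) * (ρ y : Matrix (Fin d) (Fin d) ℂ) i j := by
        simp [Matrix.mulVec, dotProduct]
    _ = ∑ g : G, α g * (ρ (g * x) : Matrix (Fin d) (Fin d) ℂ) i j := by
        refine Fintype.sum_equiv (Equiv.mulRight x⁻¹) _ _ ?_
        intro g; simp [mul_assoc]
    _ = (M * (ρ x : Matrix (Fin d) (Fin d) ℂ)) i j := by
        rw [hM, Matrix.sum_mul, Matrix.sum_apply]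
        refine Finset.sum_congr rfl fun g _ => ?_
        rw [hmul, Matrix.smul_mul, Matrix.smul_apply, smul_eq_mul]
    _ = c * (ρ x : Matrix (Fin d) (Fin d) ℂ) i j := key
    _ = _ := by rw [hceq]; rfl
end

section
/- Let K and H be finite groups, φ : H →* Aut(K), and let G = K ⋊_φ H, with canonical embeddings inl : K → G and inr : H → G. Suppose α : G → ℂ satisfies (C1) α(inr(h) · g · inl(k) · g⁻¹) = α(inr(h) · inl(k)) for all g ∈ G, k ∈ K, h ∈ H, and (C2) α(inr(h' h h'⁻¹) · inl(k)) = α(inr(h) · inl(k)) for all h, h' ∈ H, k ∈ K. Let A be the adjacency matrix of the Cayley color graph Γ(G; α), i.e. A(x, y) = α(y · x⁻¹). Let ρ^H : H → U(d_H) and ρ^K : K → U(d_K) be irreducible unitary representations with characters χ^H and χ^K. For 1 ≤ i, j ≤ d_H and 1 ≤ i', j' ≤ d_K, let v ∈ ℂ^G be the vector determined by v(inr(h) · inl(k)) = ρ^H(h)_{ij} · ρ^K(k)_{i'j'} for all h ∈ H, k ∈ K. Then A · v = Λ · v, where Λ = (1/(d_H d_K)) · Σ_{h ∈ H} Σ_{k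 ∈ K} α(inr(h) · inl(k)) χ^H(h) χ^K(k). (By (C2), Λ equals the paper's formula (1/(d_H d_K)) Σ_C |C| χ^H(h_C) Σ_{k ∈ K} α(inr(h_C) · inl(k)) χ^K(k), summing over the conjugacy classes C of H with representatives h_C.) -/
open SemidirectProduct

instance SemidirectProduct.instFintype {K H : Type*} [Group K] [Group H] {φ : H →* MulAut K}
    [Fintype K] [Fintype H] : Fintype (K ⋊[φ] H) :=
  Fintype.ofEquiv (K × H)
    { toFun := fun p => ⟨p.1, p.2⟩
      invFun := fun g => (g.left, g.right)
      left_inv := fun _ => rfl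
      right_inv := fun _ => rfl }

/-- Schur's lemma: a matrix commuting with an irreducible unitary representation is scalar. -/
lemma schur_aux {G : Type*} [Group G] {d : ℕ} (hd : 0 < d)
    (ρ : G →* Matrix.unitaryGroup (Fin d) ℂ) (hirr : IsIrreducibleUnitaryRep ρ)
    (N : Matrix (Fin d) (Fin d) ℂ)
    (hN : ∀ g : G, (ρ g : Matrix (Fin d) (Fin d) ℂ) * N = N * (ρ g : Matrix (Fin d) (Fin d) ℂ)) :
    N = (N.trace / (d : ℂ)) • 1 := by
  haveI : Nonempty (Fin d) := ⟨⟨0, hd⟩⟩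
  haveI : Nontrivial (Fin d → ℂ) := inferInstance
  obtain ⟨μ, hμ⟩ := Module.End.exists_eigenvalue (Matrix.mulVecLin N)
  set W := Module.End.eigenspace (Matrix.mulVecLin N) μ with hWdef
  have hinv : ∀ g : G, ∀ w ∈ W, (ρ g : Matrix (Fin d) (Fin d) ℂ).mulVec w ∈ W := by
    intro g w hw
    rw [hWdef, Module.End.mem_eigenspace_iff, Matrix.mulVecLin_apply] at hw ⊢
    rw [Matrix.mulVec_mulVec, ← hN g, ← Matrix.mulVec_mulVec, hw, Matrix.mulVec_smul]
  have hW : W = ⊤ := by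
    rcases hirr W hinv with h | h
    · exact absurd h hμ
    · exact h
  have hall : ∀ w : Fin d → ℂ, N.mulVec w = μ • w := by
    intro w
    have hw : w ∈ W := hW ▸ Submodule.mem_top
    rwa [hWdef, Module.End.mem_eigenspace_iff, Matrix.mulVecLin_apply] at hw
  have hNeq : N = μ • 1 := by
    ext a b
    have := congrFun (hall (Pi.single b 1)) a
    simp [Matrix.mulVec_single, Matrix.smul_apply, Matrix.one_apply, Pi.single_apply] at this ⊢
    simpa [mul_comm] using this
  have htr : N.trace = μ * d := by
    rw [hNeq, Matrix.trace_smul, Matrix.trace_one]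
    simp [Fintype.card_fin, smul_eq_mul]
  have hd' : (d : ℂ) ≠ 0 := Nat.cast_ne_zero.mpr hd.ne'
  rw [htr, hNeq, mul_div_cancel_right₀ _ hd']

/-- Theorem 3.1 of the paper (eigenvector form): for `G = K ⋊[φ] H` and `α` satisfying
conditions (C1) and (C2), the vector `v` determined by
`v(inr h * inl k) = ρᴴ(h)_{i j} · ρᴷ(k)_{i' j'}` is an eigenvector of the adjacency matrix
`A(x,y) = α (y * x⁻¹)` of `Γ(G; α)`, with eigenvalue
`Λ = (1/(d_H d_K)) ∑_{h ∈ H} ∑_{k ∈ K} α(inr h * inl k) χᴴ(h) χᴷ(k)`. -/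
theorem semidirect_cayley_adj_eigenvector {K H : Type*} [Group K] [Group H]
    [Fintype K] [Fintype H] (φ : H →* MulAut K) (α : K ⋊[φ] H → ℂ)
    (hC1 : ∀ (g : K ⋊[φ] H) (k : K) (h : H),
      α (inr h * g * inl k * g⁻¹) = α (inr h * inl k))
    (hC2 : ∀ (h h' : H) (k : K),
      α (inr (h' * h * h'⁻¹) * inl k) = α (inr h * inl k))
    {dH dK : ℕ}
    (ρH : H →* Matrix.unitaryGroup (Fin dH) ℂ) (hirrH : IsIrreducibleUnitaryRep ρH)
    (ρK : K →* Matrix.unitaryGroup (Fin dK) ℂ) (hirrK : IsIrreducibleUnitaryRep ρK)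
    (i j : Fin dH) (i' j' : Fin dK)
    (v : K ⋊[φ] H → ℂ)
    (hv : ∀ (h : H) (k : K),
      v (inr h * inl k) =
        (ρH h : Matrix (Fin dH) (Fin dH) ℂ) i j * (ρK k : Matrix (Fin dK) (Fin dK) ℂ) i' j') :
    (Matrix.of fun x y : K ⋊[φ] H => α (y * x⁻¹)).mulVec v =
      ((1 / ((dH : ℂ) * (dK : ℂ))) *
          ∑ h : H, ∑ k : K, α (inr h * inl k) *
            Matrix.trace (ρH h : Matrix (Fin dH) (Fin dH) ℂ) *
            Matrix.trace (ρK k : Matrix (Fin dK) (Fin dK) ℂ)) • v := by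
  classical
  have hdH : 0 < dH := i.pos
  have hdK : 0 < dK := i'.pos
  have hdH' : (dH : ℂ) ≠ 0 := Nat.cast_ne_zero.mpr hdH.ne'
  have hdK' : (dK : ℂ) ≠ 0 := Nat.cast_ne_zero.mpr hdK.ne'
  have coeK : ∀ a b : K, (ρK (a * b) : Matrix (Fin dK) (Fin dK) ℂ)
      = (ρK a : Matrix (Fin dK) (Fin dK) ℂ) * (ρK b : Matrix (Fin dK) (Fin dK) ℂ) := by
    intro a b; rw [map_mul]; rfl
  have coeH : ∀ a b : H, (ρH (a * b) : Matrix (Fin dH) (Fin dH) ℂ)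
      = (ρH a : Matrix (Fin dH) (Fin dH) ℂ) * (ρH b : Matrix (Fin dH) (Fin dH) ℂ) := by
    intro a b; rw [map_mul]; rfl
  -- α invariance properties
  have hα1 : ∀ (h : H) (k₀ k : K), α (inr h * inl (k₀ * k * k₀⁻¹)) = α (inr h * inl k) := by
    intro h k₀ k
    have := hC1 (inl k₀ : K ⋊[φ] H) k h
    rw [show (inr h * inl k₀ * inl k * (inl k₀)⁻¹ : K ⋊[φ] H) = inr h * inl (k₀ * k * k₀⁻¹) by
      simp [mul_assoc, ← map_mul, ← map_inv]] at this
    exact this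
  have hα2 : ∀ (h h' : H) (k : K), α (inr h * inl (φ h' k)) = α (inr h * inl k) := by
    intro h h' k
    have := hC1 (inr h' : K ⋊[φ] H) k h
    rw [show (inr h * inr h' * inl k * (inr h')⁻¹ : K ⋊[φ] H) = inr h * inl (φ h' k) by
      rw [inl_aut]; simp [mul_assoc]] at this
    exact this
  -- the K-side matrices NK h, scalar by Schur
  set NK : H → Matrix (Fin dK) (Fin dK) ℂ :=
    fun h => ∑ k : K, α (inr h * inl k) • (ρK k : Matrix (Fin dK) (Fin dK) ℂ) with hNKdef
  have hNKcomm : ∀ (h : H) (k₀ : K),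
      (ρK k₀ : Matrix (Fin dK) (Fin dK) ℂ) * NK h = NK h * (ρK k₀ : Matrix (Fin dK) (Fin dK) ℂ) := by
    intro h k₀
    rw [hNKdef]
    rw [Finset.mul_sum, Finset.sum_mul]
    refine Fintype.sum_equiv ((Equiv.mulLeft k₀).trans (Equiv.mulRight k₀⁻¹)) _ _ ?_
    intro k
    simp only [Equiv.trans_apply, Equiv.coe_mulLeft, Equiv.coe_mulRight]
    rw [hα1 h k₀ k, Matrix.mul_smul, Matrix.smul_mul, ← coeK, ← coeK]
    congr 2
    group
  set cK : H → ℂ :=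
    fun h => (∑ k : K, α (inr h * inl k) * (ρK k : Matrix (Fin dK) (Fin dK) ℂ).trace) / dK
      with hcKdef
  have hNKeq : ∀ h : H, NK h = cK h • (1 : Matrix (Fin dK) (Fin dK) ℂ) := by
    intro h
    rw [schur_aux hdK ρK hirrK (NK h) (hNKcomm h)]
    congr 1
    rw [hcKdef, hNKdef]
    congr 1
    rw [Matrix.trace_sum]
    exact Finset.sum_congr rfl fun k _ => by rw [Matrix.trace_smul, smul_eq_mul]
  -- the H-side matrix PH, scalar by Schur
  set PH : Matrix (Fin dH) (Fin dH) ℂ :=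
    ∑ h : H, cK h • (ρH h : Matrix (Fin dH) (Fin dH) ℂ) with hPHdef
  have hcKconj : ∀ h₀ h : H, cK (h₀ * h * h₀⁻¹) = cK h := by
    intro h₀ h
    have : (∑ k : K, α (inr (h₀ * h * h₀⁻¹) * inl k) * (ρK k : Matrix (Fin dK) (Fin dK) ℂ).trace)
        = ∑ k : K, α (inr h * inl k) * (ρK k : Matrix (Fin dK) (Fin dK) ℂ).trace :=
      Finset.sum_congr rfl fun k _ => by rw [hC2 h h₀ k]
    simp only [hcKdef]
    rw [this]
  have hPHcomm : ∀ h₀ : H,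
      (ρH h₀ : Matrix (Fin dH) (Fin dH) ℂ) * PH = PH * (ρH h₀ : Matrix (Fin dH) (Fin dH) ℂ) := by
    intro h₀
    rw [hPHdef, Finset.mul_sum, Finset.sum_mul]
    refine Fintype.sum_equiv ((Equiv.mulLeft h₀).trans (Equiv.mulRight h₀⁻¹)) _ _ ?_
    intro h
    simp only [Equiv.trans_apply, Equiv.coe_mulLeft, Equiv.coe_mulRight]
    rw [hcKconj h₀ h, Matrix.mul_smul, Matrix.smul_mul, ← coeH, ← coeH]
    congr 2
    group
  set Λ : ℂ := PH.trace / dH with hΛdef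
  have hPHeq : PH = Λ • (1 : Matrix (Fin dH) (Fin dH) ℂ) :=
    schur_aux hdH ρH hirrH PH hPHcomm
  -- identify Λ with the stated eigenvalue
  have hΛval : Λ = (1 / ((dH : ℂ) * (dK : ℂ))) *
      ∑ h : H, ∑ k : K, α (inr h * inl k) *
        Matrix.trace (ρH h : Matrix (Fin dH) (Fin dH) ℂ) *
        Matrix.trace (ρK k : Matrix (Fin dK) (Fin dK) ℂ) := by
    rw [hΛdef, hPHdef]
    rw [Matrix.trace_sum]
    have : ∀ h : H, (cK h • (ρH h : Matrix (Fin dH) (Fin dH) ℂ)).trace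
        = (∑ k : K, α (inr h * inl k) * (ρH h : Matrix (Fin dH) (Fin dH) ℂ).trace *
            (ρK k : Matrix (Fin dK) (Fin dK) ℂ).trace) / dK := by
      intro h
      rw [Matrix.trace_smul, smul_eq_mul, hcKdef, div_mul_eq_mul_div, Finset.sum_mul]
      congr 1
      exact Finset.sum_congr rfl fun k _ => by ring
    rw [Finset.sum_congr rfl fun h _ => this h, ← Finset.sum_div, div_div]
    rw [one_div, mul_comm (dK : ℂ) (dH : ℂ), inv_mul_eq_div]
  -- main computation, pointwise
  rw [← hΛval]
  funext x
  obtain ⟨h', k', rfl⟩ : ∃ (h'' : H) (k'' : K), x = inr h'' * inl k'' :=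
    ⟨x.right, (φ x.right)⁻¹ x.left, by ext <;> simp⟩
  have key : ∀ (m : H) (n : K),
      α (inr m * inl n * (inr h' * inl k' : K ⋊[φ] H)⁻¹)
        = α (inr (m * h'⁻¹) * inl (n * k'⁻¹)) := by
    intro m n
    have h1 : (inr m * inl n * (inr h' * inl k' : K ⋊[φ] H)⁻¹ : K ⋊[φ] H)
        = inr (m * h'⁻¹) * inr h' * inl (n * k'⁻¹) * (inr h' : K ⋊[φ] H)⁻¹ := by
      simp only [map_mul, map_inv]
      group
    rw [h1, hC1 (inr h') (n * k'⁻¹) (m * h'⁻¹)]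
  have hbij : Function.Bijective (fun p : H × K => (inr p.1 * inl p.2 : K ⋊[φ] H)) :=
    (Equiv.mk (fun p : H × K => (inr p.1 * inl p.2 : K ⋊[φ] H))
      (fun g => (g.right, (φ g.right)⁻¹ g.left))
      (fun p => by ext <;> simp) (fun g => by ext <;> simp)).bijective
  have innerK : ∀ m : H, ∑ n : K, α (inr m * inl n) *
        ((ρK n : Matrix (Fin dK) (Fin dK) ℂ) * (ρK k' : Matrix (Fin dK) (Fin dK) ℂ)) i' j'
      = cK m * (ρK k' : Matrix (Fin dK) (Fin dK) ℂ) i' j' := by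
    intro m
    have h2 : (NK m * (ρK k' : Matrix (Fin dK) (Fin dK) ℂ)) i' j'
        = ∑ n : K, α (inr m * inl n) *
            ((ρK n : Matrix (Fin dK) (Fin dK) ℂ) * (ρK k' : Matrix (Fin dK) (Fin dK) ℂ)) i' j' := by
      simp only [hNKdef, Matrix.sum_mul, Matrix.sum_apply, Matrix.smul_mul, Matrix.smul_apply,
        smul_eq_mul]
    rw [← h2, hNKeq m, Matrix.smul_mul, Matrix.one_mul, Matrix.smul_apply, smul_eq_mul]
  have outerH : ∑ m : H, cK m *
        ((ρH m : Matrix (Fin dH) (Fin dH) ℂ) * (ρH h' : Matrix (Fin dH) (Fin dH) ℂ)) i j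
      = Λ * (ρH h' : Matrix (Fin dH) (Fin dH) ℂ) i j := by
    have h3 : (PH * (ρH h' : Matrix (Fin dH) (Fin dH) ℂ)) i j
        = ∑ m : H, cK m *
            ((ρH m : Matrix (Fin dH) (Fin dH) ℂ) * (ρH h' : Matrix (Fin dH) (Fin dH) ℂ)) i j := by
      simp only [hPHdef, Matrix.sum_mul, Matrix.sum_apply, Matrix.smul_mul, Matrix.smul_apply,
        smul_eq_mul]
    rw [← h3, hPHeq, Matrix.smul_mul, Matrix.one_mul, Matrix.smul_apply, smul_eq_mul]
  calc (Matrix.of fun x y : K ⋊[φ] H => α (y * x⁻¹)).mulVec v (inr h' * inl k')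
      = ∑ y : K ⋊[φ] H, α (y * (inr h' * inl k' : K ⋊[φ] H)⁻¹) * v y := by
        simp [Matrix.mulVec, dotProduct]
    _ = ∑ p : H × K, α (inr p.1 * inl p.2 * (inr h' * inl k' : K ⋊[φ] H)⁻¹) *
          v (inr p.1 * inl p.2) :=
        (Fintype.sum_bijective _ hbij _ _ fun p => rfl).symm
    _ = ∑ m : H, ∑ n : K, α (inr m * inl n * (inr h' * inl k' : K ⋊[φ] H)⁻¹) *
          v (inr m * inl n) := Fintype.sum_prod_type _
    _ = ∑ m : H, ∑ n : K, α (inr (m * h'⁻¹) * inl (n * k'⁻¹)) * v (inr m * inl n) := by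
        exact Finset.sum_congr rfl fun m _ => Finset.sum_congr rfl fun n _ => by rw [key m n]
    _ = ∑ m : H, ∑ n : K, α (inr m * inl n) * v (inr (m * h') * inl (n * k')) := by
        refine Fintype.sum_equiv (Equiv.mulRight h'⁻¹) _ _ fun m => ?_
        refine Fintype.sum_equiv (Equiv.mulRight k'⁻¹) _ _ fun n => ?_
        simp only [Equiv.coe_mulRight]
        rw [inv_mul_cancel_right, inv_mul_cancel_right]
    _ = ∑ m : H, ∑ n : K, α (inr m * inl n) *
          (((ρH m : Matrix (Fin dH) (Fin dH) ℂ) * (ρH h' : Matrix (Fin dH) (Fin dH) ℂ)) i j *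
            ((ρK n : Matrix (Fin dK) (Fin dK) ℂ) * (ρK k' : Matrix (Fin dK) (Fin dK) ℂ)) i' j') := by
        refine Finset.sum_congr rfl fun m _ => Finset.sum_congr rfl fun n _ => ?_
        rw [hv (m * h') (n * k'), coeH, coeK]
    _ = ∑ m : H, ((ρH m : Matrix (Fin dH) (Fin dH) ℂ) * (ρH h' : Matrix (Fin dH) (Fin dH) ℂ)) i j *
          (cK m * (ρK k' : Matrix (Fin dK) (Fin dK) ℂ) i' j') := by
        refine Finset.sum_congr rfl fun m _ => ?_
        rw [← innerK m, Finset.mul_sum]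
        exact Finset.sum_congr rfl fun n _ => by ring
    _ = (∑ m : H, cK m *
          ((ρH m : Matrix (Fin dH) (Fin dH) ℂ) * (ρH h' : Matrix (Fin dH) (Fin dH) ℂ)) i j) *
          (ρK k' : Matrix (Fin dK) (Fin dK) ℂ) i' j' := by
        rw [Finset.sum_mul]
        exact Finset.sum_congr rfl fun m _ => by ring
    _ = Λ * ((ρH h' : Matrix (Fin dH) (Fin dH) ℂ) i j *
          (ρK k' : Matrix (Fin dK) (Fin dK) ℂ) i' j') := by rw [outerH, mul_assoc]
    _ = (Λ • v) (inr h' * inl k') := by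
        rw [Pi.smul_apply, hv h' k', smul_eq_mul]
end

section
/- Let m, l ≥ 1, let C_m and C_l be cyclic groups of orders m and l with generators k and h respectively, let φ : C_l →* Aut(C_m) be a homomorphism, and let G = C_m ⋊_φ C_l be the split metacyclic group, with embeddings inl : C_m → G and inr : C_l → G; write k for inl(k) and h for inr(h), so every element of G is uniquely h^t k^s with 0 ≤ t < l, 0 ≤ s < m. Let S ⊆ G be of the form S = S_0 ∪ h S_1 ∪ h² S_2 ∪ ⋯ ∪ h^{l−1} S_{l−1} where each S_t ⊆ C_m (identified with inl(C_m)) and h S_t h⁻¹ ⊆ S_t for 0 ≤ t ≤ l−1. Let A be the adjacency matrix of the Cayley graph Γ(G, S), i.e. A(x, y) = 1 if y · x⁻¹ ∈ S and 0 otherwise. Then for every 0 ≤ u ≤ l−1 and 0 ≤ v ≤ m−1, the vector w ∈ ℂ^G defined by w(h^t k^s) = e^{2πi u t / l} · e^{2πi v s / m} is an eigenvector of A with eigenvalue Σ_{t=0}^{l−1} e^{2πi u t / l} · (Σ_{s : k^s ∈ S_t} e^{2πi v s / m}). -/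
open SemidirectProduct

lemma pow_eq_of_modEq_aux {ζ : ℂ} {m a b : ℕ} (h1 : ζ ^ m = 1) (hab : a ≡ b [MOD m]) :
    ζ ^ a = ζ ^ b := by
  rcases Nat.eq_zero_or_pos m with hm | hm
  · subst hm
    have : a = b := by simpa [Nat.ModEq] using hab
    rw [this]
  · conv_lhs => rw [← Nat.div_add_mod a m]
    conv_rhs => rw [← Nat.div_add_mod b m]
    have : a % m = b % m := hab
    rw [pow_add, pow_add, pow_mul, pow_mul, h1, one_pow, one_pow, this]

/-- Corollary 3.3 of the paper (eigenvector form): let `G = C_m ⋊[φ] C_l` be a split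
metacyclic group, where `C_m = ⟨k⟩` and `C_l = ⟨h⟩` are cyclic of orders `m` and `l`, and let
`S = S_0 ∪ h S_1 ∪ ⋯ ∪ h^{l-1} S_{l-1}` with `S_t ⊆ C_m` and `h S_t h⁻¹ ⊆ S_t`. Then for all
`0 ≤ u < l` and `0 ≤ v < m`, the vector `w(h^t k^s) = e^{2πiut/l} e^{2πivs/m}` is an
eigenvector of the adjacency matrix of the Cayley graph `Γ(G, S)` with eigenvalue
`∑_{t=0}^{l-1} e^{2πiut/l} (∑_{s : k^s ∈ S_t} e^{2πivs/m})`. -/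
theorem split_metacyclic_cayley_eigenvector {K H : Type*} [Group K] [Group H]
    [Fintype K] [Fintype H] [DecidableEq K]
    {m l : ℕ} (hm : 1 ≤ m) (hl : 1 ≤ l)
    (k : K) (hkord : orderOf k = m) (hkgen : ∀ x : K, x ∈ Subgroup.zpowers k)
    (h : H) (hhord : orderOf h = l) (hhgen : ∀ x : H, x ∈ Subgroup.zpowers h)
    (φ : H →* MulAut K)
    (St : Fin l → Finset K) (hSconj : ∀ t : Fin l, ∀ x ∈ St t, φ h x ∈ St t)
    (S : Set (K ⋊[φ] H))
    (hS : S = ⋃ t : Fin l, (fun x : K => (inr h : K ⋊[φ] H) ^ (t : ℕ) * inl x) '' ↑(St t))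
    (u v : ℕ) (hu : u < l) (hv : v < m)
    (w : K ⋊[φ] H → ℂ)
    (hw : ∀ t s : ℕ, w ((inr h : K ⋊[φ] H) ^ t * (inl k : K ⋊[φ] H) ^ s) =
      Complex.exp (2 * Real.pi * Complex.I * u * t / l) *
        Complex.exp (2 * Real.pi * Complex.I * v * s / m)) :
    (Matrix.of fun x y : K ⋊[φ] H => S.indicator (fun _ => (1 : ℂ)) (y * x⁻¹)).mulVec w =
      (∑ t : Fin l, Complex.exp (2 * Real.pi * Complex.I * u * (t : ℕ) / l) *
          ∑ s ∈ (Finset.range m).filter (fun s => k ^ s ∈ St t),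
            Complex.exp (2 * Real.pi * Complex.I * v * s / m)) • w := by
  classical
  set ζl : ℂ := Complex.exp (2 * Real.pi * Complex.I * u / l) with hζl_def
  set ζm : ℂ := Complex.exp (2 * Real.pi * Complex.I * v / m) with hζm_def
  -- exponential reformulations
  have hζl : ∀ t : ℕ, Complex.exp (2 * Real.pi * Complex.I * u * t / l) = ζl ^ t := by
    intro t
    rw [hζl_def, ← Complex.exp_nat_mul]
    congr 1
    ring
  have hζm : ∀ s : ℕ, Complex.exp (2 * Real.pi * Complex.I * v * s / m) = ζm ^ s := by
    intro s
    rw [hζm_def, ← Complex.exp_nat_mul]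
    congr 1
    ring
  have hl0 : (l : ℂ) ≠ 0 := by exact_mod_cast (Nat.pos_of_ne_zero (by omega)).ne'
  have hm0 : (m : ℂ) ≠ 0 := by exact_mod_cast (Nat.pos_of_ne_zero (by omega)).ne'
  have hζl1 : ζl ^ l = 1 := by
    rw [← Complex.exp_nat_mul]
    rw [show (l : ℂ) * (2 * Real.pi * Complex.I * u / l) = u * (2 * Real.pi * Complex.I) by
      field_simp]
    exact_mod_cast Complex.exp_nat_mul_two_pi_mul_I u
  have hζm1 : ζm ^ m = 1 := by
    rw [← Complex.exp_nat_mul]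
    rw [show (m : ℂ) * (2 * Real.pi * Complex.I * v / m) = v * (2 * Real.pi * Complex.I) by
      field_simp]
    exact_mod_cast Complex.exp_nat_mul_two_pi_mul_I v
  -- discrete logarithms
  have hdexK : ∀ x : K, ∃ s : ℕ, k ^ s = x := by
    intro x
    have := (mem_powers_iff_mem_zpowers (x := k) (y := x)).mpr (hkgen x)
    exact (Submonoid.mem_powers_iff _ _).mp this
  have hdexH : ∀ x : H, ∃ s : ℕ, h ^ s = x := by
    intro x
    have := (mem_powers_iff_mem_zpowers (x := h) (y := x)).mpr (hhgen x)
    exact (Submonoid.mem_powers_iff _ _).mp this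
  set d : K → ℕ := fun x => Classical.choose (hdexK x) % m with hd_def
  set e : H → ℕ := fun x => Classical.choose (hdexH x) % l with he_def
  have hdpow : ∀ x : K, k ^ d x = x := by
    intro x
    rw [hd_def]
    simp only
    rw [← hkord, pow_mod_orderOf]
    exact Classical.choose_spec (hdexK x)
  have hepow : ∀ x : H, h ^ e x = x := by
    intro x
    rw [he_def]
    simp only
    rw [← hhord, pow_mod_orderOf]
    exact Classical.choose_spec (hdexH x)
  have hdlt : ∀ x : K, d x < m := fun x => Nat.mod_lt _ hm
  -- the character on K
  set χ : K → ℂ := fun x => ζm ^ d x with hχ_def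
  have hχpow : ∀ s : ℕ, χ (k ^ s) = ζm ^ s := by
    intro s
    apply pow_eq_of_modEq_aux hζm1
    have : k ^ d (k ^ s) = k ^ s := hdpow _
    rwa [pow_eq_pow_iff_modEq, hkord] at this
  have hχmul : ∀ x y : K, χ (x * y) = χ x * χ y := by
    intro x y
    rw [hχ_def]
    simp only
    rw [← pow_add]
    apply pow_eq_of_modEq_aux hζm1
    have : k ^ d (x * y) = k ^ (d x + d y) := by
      rw [pow_add, hdpow, hdpow, hdpow]
    rwa [pow_eq_pow_iff_modEq, hkord] at this
  -- values of w
  have hwf : ∀ (T : ℕ) (c : K), w ((inr h : K ⋊[φ] H) ^ T * inl c) = ζl ^ T * χ c := by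
    intro T c
    have h1 : (inl c : K ⋊[φ] H) = (inl k : K ⋊[φ] H) ^ d c := by rw [← map_pow, hdpow]
    rw [h1, hw T (d c), hζl, hζm]
  -- normal form
  have hxform : ∀ x : K ⋊[φ] H, x = (inr h : K ⋊[φ] H) ^ e x.right * inl ((φ x.right)⁻¹ x.left) := by
    intro x
    rw [← map_pow, hepow]
    ext <;> simp
  -- product computation
  have hprod : ∀ (t p : ℕ) (a c : K),
      (inr h : K ⋊[φ] H) ^ t * inl a * ((inr h : K ⋊[φ] H) ^ p * inl c)
        = (inr h : K ⋊[φ] H) ^ (t + p) * inl ((φ (h ^ p))⁻¹ a * c) := by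
    intro t p a c
    rw [pow_add, ← map_pow, ← map_pow,
      show (inl ((φ (h ^ p))⁻¹ a * c) : K ⋊[φ] H) = inl ((φ (h ^ p))⁻¹ a) * inl c from map_mul _ _ _,
      inl_aut_inv, map_inv]
    group
  -- invariance of the character sums
  have hconjp : ∀ (t : Fin l) (p : ℕ), ∀ a ∈ St t, φ (h ^ p) a ∈ St t := by
    intro t p
    induction p with
    | zero => intro a ha; simpa using ha
    | succ p ih =>
      intro a ha
      have : φ (h ^ (p + 1)) a = φ (h ^ p) (φ h a) := by
        rw [pow_succ, map_mul]
        rfl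
      rw [this]
      exact ih _ (hSconj t a ha)
  have hinv : ∀ (t : Fin l) (p : ℕ),
      ∑ a ∈ St t, χ ((φ (h ^ p))⁻¹ a) = ∑ a ∈ St t, χ a := by
    intro t p
    have hinj : Function.Injective (φ (h ^ p)) := (φ (h ^ p)).injective
    have himg : Finset.image (φ (h ^ p)) (St t) = St t := by
      apply Finset.eq_of_subset_of_card_le
      · intro a ha
        obtain ⟨b, hb, rfl⟩ := Finset.mem_image.mp ha
        exact hconjp t p b hb
      · rw [Finset.card_image_of_injective _ hinj]
    conv_lhs => rw [← himg]
    rw [Finset.sum_image (fun a _ b _ hab => hinj hab)]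
    apply Finset.sum_congr rfl
    intro a _
    congr 1
    exact (φ (h ^ p)).symm_apply_apply a
  -- inner sum of eigenvalue
  have hinner : ∀ t : Fin l,
      ∑ s ∈ (Finset.range m).filter (fun s => k ^ s ∈ St t),
        Complex.exp (2 * Real.pi * Complex.I * v * s / m) = ∑ a ∈ St t, χ a := by
    intro t
    simp only [hζm]
    refine Finset.sum_nbij' (fun s => k ^ s) (fun a => d a) ?_ ?_ ?_ ?_ ?_
    · exact fun s hs => (Finset.mem_filter.mp hs).2
    · exact fun a ha => Finset.mem_filter.mpr
        ⟨Finset.mem_range.mpr (hdlt a), by rw [hdpow]; exact ha⟩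
    · intro s hs
      show d (k ^ s) = s
      have h1 : k ^ d (k ^ s) = k ^ s := hdpow _
      rw [pow_eq_pow_iff_modEq, hkord] at h1
      have h2 : d (k ^ s) % m = s % m := h1
      have h3 : s < m := Finset.mem_range.mp (Finset.mem_filter.mp hs).1
      have h4 : d (k ^ s) < m := hdlt _
      rwa [Nat.mod_eq_of_lt h4, Nat.mod_eq_of_lt h3] at h2
    · exact fun a _ => hdpow a
    · exact fun s _ => (hχpow s).symm
  -- the finset version of S
  set T : Finset (K ⋊[φ] H) :=
    Finset.univ.biUnion (fun t : Fin l => (St t).image fun a => (inr h : K ⋊[φ] H) ^ (t : ℕ) * inl a)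
    with hT_def
  have hST : S.toFinset = T := by
    ext g
    simp only [Set.mem_toFinset, hS, Set.mem_iUnion, Set.mem_image, Finset.mem_coe, hT_def,
      Finset.mem_biUnion, Finset.mem_univ, true_and, Finset.mem_image]
  have hdisj : (↑(Finset.univ : Finset (Fin l)) : Set (Fin l)).PairwiseDisjoint
      (fun t : Fin l => (St t).image fun a => (inr h : K ⋊[φ] H) ^ (t : ℕ) * inl a) := by
    intro t _ t' _ hne
    refine Finset.disjoint_left.mpr ?_
    rintro g hg hg'
    obtain ⟨a, ha, rfl⟩ := Finset.mem_image.mp hg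
    obtain ⟨b, hb, hba⟩ := Finset.mem_image.mp hg'
    apply hne
    have h1 := congrArg SemidirectProduct.right hba
    simp only [← map_pow, mul_right, right_inr, right_inl, mul_one] at h1
    rw [pow_eq_pow_iff_modEq, hhord] at h1
    have h2 : (t' : ℕ) % l = (t : ℕ) % l := h1
    have h3 := t.isLt
    have h4 := t'.isLt
    rw [Nat.mod_eq_of_lt h4, Nat.mod_eq_of_lt h3] at h2
    exact Fin.ext h2.symm
  -- main computation
  funext x
  set p : ℕ := e x.right with hp_def
  set c : K := (φ x.right)⁻¹ x.left with hc_def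
  have hwx : w x = ζl ^ p * χ c := by
    conv_lhs => rw [hxform x]
    exact hwf p c
  have lhs1 : (Matrix.of fun x y : K ⋊[φ] H => S.indicator (fun _ => (1 : ℂ)) (y * x⁻¹)).mulVec w x
      = ∑ g : K ⋊[φ] H, S.indicator (fun _ => (1 : ℂ)) g * w (g * x) := by
    rw [Matrix.mulVec]
    simp only [dotProduct, Matrix.of_apply]
    exact (Fintype.sum_equiv (Equiv.mulRight x)
      (fun g => S.indicator (fun _ => (1 : ℂ)) g * w (g * x))
      (fun y => S.indicator (fun _ => (1 : ℂ)) (y * x⁻¹) * w y)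
      (fun g => by simp)).symm
  have lhs2 : ∑ g : K ⋊[φ] H, S.indicator (fun _ => (1 : ℂ)) g * w (g * x)
      = ∑ g ∈ S.toFinset, w (g * x) := by
    have key : ∀ g : K ⋊[φ] H, S.indicator (fun _ => (1 : ℂ)) g * w (g * x)
        = if g ∈ S.toFinset then w (g * x) else 0 := by
      intro g
      by_cases hg : g ∈ S <;> simp [Set.indicator_apply, hg, Set.mem_toFinset]
    rw [Finset.sum_congr rfl (fun g _ => key g), Finset.sum_ite_mem, Finset.univ_inter]
  rw [lhs1, lhs2, hST, hT_def, Finset.sum_biUnion hdisj]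
  have main : ∀ t : Fin l,
      ∑ g ∈ (St t).image (fun a => (inr h : K ⋊[φ] H) ^ (t : ℕ) * inl a), w (g * x)
        = (ζl ^ (t : ℕ) * ∑ a ∈ St t, χ a) * (ζl ^ p * χ c) := by
    intro t
    rw [Finset.sum_image (fun a _ b _ hab => inl_injective (mul_left_cancel hab))]
    have : ∀ a ∈ St t, w ((inr h : K ⋊[φ] H) ^ (t : ℕ) * inl a * x)
        = (ζl ^ (t : ℕ) * χ ((φ (h ^ p))⁻¹ a)) * (ζl ^ p * χ c) := by
      intro a _
      conv_lhs => rw [hxform x, ← hp_def, ← hc_def, hprod, hwf]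
      rw [hχmul, pow_add]
      ring
    rw [Finset.sum_congr rfl this, ← Finset.sum_mul, ← Finset.mul_sum, hinv t p]
  rw [Finset.sum_congr rfl (fun t _ => main t)]
  simp only [Pi.smul_apply, smul_eq_mul, hwx]
  rw [← Finset.sum_mul]
  congr 1
  apply Finset.sum_congr rfl
  intro t _
  rw [hζl, hinner t]
end

section
/- Let m, l ≥ 1, let C_m and C_l be cyclic groups of orders m and l with generators k and h respectively, let φ : C_l →* Aut(C_m) be a homomorphism, and let G = C_m ⋊_φ C_l, with every element of G uniquely of the form h^t k^s (0 ≤ t < l, 0 ≤ s < m). Let S ⊆ G be of the form S = S_0 ∪ h S_1 ∪ ⋯ ∪ h^{l−1} S_{l−1} where each S_t ⊆ C_m and h S_t h⁻¹ ⊆ S_t. Then the characteristic polynomial of the adjacency matrix A of the Cayley graph Γ(G, S), A(x, y) = 1 if y · x⁻¹ ∈ S and 0 otherwise, equals ∏_{u=0}^{l−1} ∏_{v=0}^{m−1} (X − λ_{u,v}), where λ_{u,v} = Σ_{t=0}^{l−1} e^{2πi u t / l} · (Σ_{s : k^s ∈ S_t} e^{2πi v s / m}). -/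
open SemidirectProduct Polynomial

set_option linter.unusedSectionVars false

noncomputable section

/-- `g ^ x.val` for `x : ZMod n`. -/
private def powZ {G : Type*} [Group G] {n : ℕ} (g : G) (x : ZMod n) : G := g ^ x.val

private def zmodToFin {n : ℕ} [NeZero n] (x : ZMod n) : Fin n := ⟨x.val, ZMod.val_lt x⟩

private lemma powZ_add {G : Type*} [Group G] {n : ℕ} [NeZero n] {g : G} (hg : orderOf g = n)
    (x y : ZMod n) : powZ g (x + y) = powZ g x * powZ g y := by
  unfold powZ
  rw [ZMod.val_add]
  subst hg
  rw [pow_mod_orderOf, pow_add]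

private lemma powZ_inj {G : Type*} [Group G] [Finite G] {n : ℕ} [NeZero n] {g : G}
    (hg : orderOf g = n) : Function.Injective (powZ (n := n) g) := by
  intro x y hxy
  have := pow_injOn_Iio_orderOf (x := g) (by rw [hg]; exact ZMod.val_lt x)
    (by rw [hg]; exact ZMod.val_lt y) hxy
  exact ZMod.val_injective n this

private lemma image_eq_self {K : Type*} [DecidableEq K] (e : K ≃ K) (T : Finset K)
    (hT : ∀ x ∈ T, e x ∈ T) : T.image e = T := by
  apply Finset.eq_of_subset_of_card_le
  · intro y hy
    obtain ⟨x, hx, rfl⟩ := Finset.mem_image.mp hy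
    exact hT x hx
  · rw [Finset.card_image_of_injective _ e.injective]

private lemma sum_filter_perm {K : Type*} [Fintype K] [DecidableEq K] (e : K ≃ K) (T : Finset K)
    (hT : T.image e = T) (G : K → ℂ) :
    ∑ x ∈ Finset.univ.filter (fun x => e x ∈ T), G x = ∑ x ∈ T, G x := by
  have h1 : ∑ x ∈ Finset.univ.filter (fun x => e x ∈ T), G x = ∑ y ∈ T, G (e.symm y) := by
    refine Finset.sum_equiv e (fun x => ?_) (fun x _ => ?_)
    · simp
    · simp
  rw [h1]
  conv_lhs => rw [← hT]
  rw [Finset.sum_image (fun x _ y _ hxy => e.injective hxy)]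
  simp

open SemidirectProduct Polynomial

section
variable {K : Type*} [Group K] [Fintype K] [DecidableEq K] {m : ℕ} [NeZero m]

private lemma sum_filter_zmod (e : K ≃ K) (T : Finset K) (hT : T.image e = T)
    (pK : ZMod m ≃ K) (g : ZMod m → ℂ) :
    ∑ s ∈ Finset.univ.filter (fun s : ZMod m => e (pK s) ∈ T), g s =
      ∑ s ∈ Finset.univ.filter (fun s : ZMod m => pK s ∈ T), g s := by
  have h1 : ∀ (U : Finset K),
      ∑ s ∈ Finset.univ.filter (fun s : ZMod m => pK s ∈ U), g s =
        ∑ x ∈ Finset.univ.filter (fun x : K => x ∈ U), g (pK.symm x) := by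
    intro U
    refine Finset.sum_equiv pK (fun s => ?_) (fun s _ => ?_) <;> simp
  have h2 : ∑ s ∈ Finset.univ.filter (fun s : ZMod m => e (pK s) ∈ T), g s =
      ∑ x ∈ Finset.univ.filter (fun x : K => e x ∈ T), g (pK.symm x) := by
    refine Finset.sum_equiv pK (fun s => ?_) (fun s _ => ?_) <;> simp
  rw [h1, h2]
  have := sum_filter_perm e T hT (fun x => g (pK.symm x))
  rw [this]
  rw [Finset.filter_univ_mem]

private lemma mulaut_pow_mem (σ : MulAut K) (T : Finset K) (hT : ∀ x ∈ T, σ x ∈ T) (n : ℕ) :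
    ∀ x ∈ T, (σ ^ n) x ∈ T := by
  induction n with
  | zero => intro x hx; simpa using hx
  | succ n ih =>
      intro x hx
      rw [pow_succ, MulAut.mul_apply]
      exact ih _ (hT x hx)
end
noncomputable section
open AddChar in
private def chi (l m : ℕ) [NeZero l] [NeZero m] (p : ZMod l × ZMod m) :
    AddChar (ZMod l × ZMod m) ℂ :=
  ((zmodAddEquiv p.1).compAddMonoidHom (AddMonoidHom.fst _ _)) *
    ((zmodAddEquiv p.2).compAddMonoidHom (AddMonoidHom.snd _ _))

private lemma chi_apply (l m : ℕ) [NeZero l] [NeZero m] (p : ZMod l × ZMod m)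
    (x : ZMod l × ZMod m) :
    chi l m p x = AddChar.zmodAddEquiv p.1 x.1 * AddChar.zmodAddEquiv p.2 x.2 := rfl

private lemma zmodAddEquiv_apply' {n : ℕ} [NeZero n] (u x : ZMod n) :
    AddChar.zmodAddEquiv u x = (AddChar.zmod n u x : ℂ) := rfl

private lemma zmod_nat_val {n : ℕ} [NeZero n] (u t : ℕ) :
    (AddChar.zmodAddEquiv ((u : ZMod n)) ((t : ZMod n)) : ℂ) =
      Complex.exp (2 * Real.pi * Complex.I * u * t / n) := by
  rw [zmodAddEquiv_apply']
  have hu : ((u : ZMod n)) = (((u : ℤ) : ZMod n)) := by push_cast; rfl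
  have ht : ((t : ZMod n)) = (((t : ℤ) : ZMod n)) := by push_cast; rfl
  rw [hu, ht, AddChar.zmod_intCast, Circle.coe_exp]
  congr 1
  push_cast
  ring

private lemma chi_injective (l m : ℕ) [NeZero l] [NeZero m] :
    Function.Injective (chi l m) := by
  intro p q hpq
  have key : ∀ x, chi l m p x = chi l m q x := fun x => DFunLike.congr_fun hpq x
  have h1 : p.1 = q.1 := by
    apply AddChar.zmodAddEquiv.injective
    ext x
    have := key (x, 0)
    simpa [chi_apply] using this
  have h2 : p.2 = q.2 := by
    apply AddChar.zmodAddEquiv.injective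
    ext x
    have := key (0, x)
    simpa [chi_apply] using this
  exact Prod.ext h1 h2
end
noncomputable section
private def eig {K : Type*} [Group K] [Fintype K] [DecidableEq K] {l m : ℕ} [NeZero l] [NeZero m]
    (k : K) (St : Fin l → Finset K) (χ : AddChar (ZMod l × ZMod m) ℂ) : ℂ :=
  ∑ t : ZMod l, χ (t, 0) *
    ∑ s ∈ Finset.univ.filter (fun s : ZMod m => powZ k s ∈ St (zmodToFin t)), χ (0, s)

private lemma charpoly_diagonal {n : Type*} [Fintype n] [DecidableEq n] (d : n → ℂ) :
    (Matrix.diagonal d).charpoly = ∏ i : n, (Polynomial.X - Polynomial.C (d i)) := by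
  rw [Matrix.charpoly]
  have : Matrix.charmatrix (Matrix.diagonal d) =
      Matrix.diagonal (fun i => Polynomial.X - Polynomial.C (d i)) := by
    ext i j
    by_cases hij : i = j
    · subst hij; simp
    · rw [Matrix.charmatrix_apply_ne _ _ _ hij, Matrix.diagonal_apply_ne _ hij,
        Matrix.diagonal_apply_ne _ hij]
      simp
  rw [this, Matrix.det_diagonal]

private lemma prod_zmod_range {n : ℕ} [NeZero n] {β : Type*} [CommMonoid β] (f : ZMod n → β) :
    ∏ x : ZMod n, f x = ∏ u ∈ Finset.range n, f u := by
  refine (Finset.prod_bij (fun (u : ℕ) _ => (u : ZMod n)) ?_ ?_ ?_ ?_).symm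
  · intros; exact Finset.mem_univ _
  · intro a ha b hb hab
    have : ((a : ZMod n)).val = ((b : ZMod n)).val := by
      exact congrArg ZMod.val hab
    rwa [ZMod.val_cast_of_lt (Finset.mem_range.mp ha),
      ZMod.val_cast_of_lt (Finset.mem_range.mp hb)] at this
  · intro x _
    exact ⟨x.val, Finset.mem_range.mpr (ZMod.val_lt x), (ZMod.natCast_zmod_val x)⟩
  · intros; rfl
end
private lemma sum_zmod_fin {n : ℕ} [NeZero n] {β : Type*} [AddCommMonoid β] (f : ZMod n → β) :
    ∑ x : ZMod n, f x = ∑ t : Fin n, f ((t : ℕ) : ZMod n) := by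
  have hbij : Function.Bijective (fun t : Fin n => ((t : ℕ) : ZMod n)) := by
    rw [Fintype.bijective_iff_injective_and_card]
    constructor
    · intro x y hxy
      apply Fin.ext
      have hv : (((x : ℕ) : ZMod n)).val = (((y : ℕ) : ZMod n)).val := by
        simp only at hxy; rw [hxy]
      rwa [ZMod.val_cast_of_lt x.isLt, ZMod.val_cast_of_lt y.isLt] at hv
    · simp [ZMod.card]
  exact (Fintype.sum_bijective _ hbij (fun t : Fin n => f ((t : ℕ) : ZMod n)) f
    (fun t => rfl)).symm

end

/-- Corollary 3.3 of the paper (spectrum form): let `G = C_m ⋊[φ] C_l` be a split metacyclic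
group, where `C_m = ⟨k⟩` and `C_l = ⟨h⟩` are cyclic of orders `m` and `l`, and let
`S = S_0 ∪ h S_1 ∪ ⋯ ∪ h^{l-1} S_{l-1}` with `S_t ⊆ C_m` and `h S_t h⁻¹ ⊆ S_t`. Then the
characteristic polynomial of the adjacency matrix of the Cayley graph `Γ(G, S)` equals
`∏_{u=0}^{l-1} ∏_{v=0}^{m-1} (X - λ_{u,v})`, where
`λ_{u,v} = ∑_{t=0}^{l-1} e^{2πiut/l} (∑_{s : k^s ∈ S_t} e^{2πivs/m})`. -/
theorem split_metacyclic_cayley_charpoly {K H : Type*} [Group K] [Group H]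
    [Fintype K] [Fintype H] [DecidableEq K] [DecidableEq H]
    {m l : ℕ} (hm : 1 ≤ m) (hl : 1 ≤ l)
    (k : K) (hkord : orderOf k = m) (hkgen : ∀ x : K, x ∈ Subgroup.zpowers k)
    (h : H) (hhord : orderOf h = l) (hhgen : ∀ x : H, x ∈ Subgroup.zpowers h)
    (φ : H →* MulAut K)
    (St : Fin l → Finset K) (hSconj : ∀ t : Fin l, ∀ x ∈ St t, φ h x ∈ St t)
    (S : Set (K ⋊[φ] H))
    (hS : S = ⋃ t : Fin l, (fun x : K => (inr h : K ⋊[φ] H) ^ (t : ℕ) * inl x) '' ↑(St t)) :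
    (Matrix.of fun x y : K ⋊[φ] H => S.indicator (fun _ => (1 : ℂ)) (y * x⁻¹)).charpoly =
      ∏ u ∈ Finset.range l, ∏ v ∈ Finset.range m,
        (X - C (∑ t : Fin l, Complex.exp (2 * Real.pi * Complex.I * u * (t : ℕ) / l) *
          ∑ s ∈ (Finset.range m).filter (fun s => k ^ s ∈ St t),
            Complex.exp (2 * Real.pi * Complex.I * v * s / m))) := by
  haveI : NeZero l := ⟨by omega⟩
  haveI : NeZero m := ⟨by omega⟩
  classical
  -- cardinalities
  have hcardK : Fintype.card K = m := by
    have htop : Subgroup.zpowers k = ⊤ := by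
      rw [Subgroup.eq_top_iff']; exact hkgen
    rw [← Nat.card_eq_fintype_card, ← hkord, ← Nat.card_zpowers, htop, Subgroup.card_top]
  have hcardH : Fintype.card H = l := by
    have htop : Subgroup.zpowers h = ⊤ := by
      rw [Subgroup.eq_top_iff']; exact hhgen
    rw [← Nat.card_eq_fintype_card, ← hhord, ← Nat.card_zpowers, htop, Subgroup.card_top]
  -- the coordinate bijection
  set ψ : ZMod l × ZMod m → K ⋊[φ] H :=
    fun p => inr (powZ h p.1) * inl (powZ k p.2) with hψdef
  have hψinj : Function.Injective ψ := by
    intro p q hpq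
    have hr : powZ h p.1 = powZ h q.1 := by
      have := congrArg SemidirectProduct.right hpq
      simpa [hψdef] using this
    have h1 : p.1 = q.1 := powZ_inj hhord hr
    have hl' : inl (powZ k p.2) = (inl (powZ k q.2) : K ⋊[φ] H) := by
      rw [hψdef] at hpq
      simp only at hpq
      rw [h1] at hpq
      exact mul_left_cancel hpq
    exact Prod.ext h1 (powZ_inj hkord (inl_injective hl'))
  have hcardG : Fintype.card (K ⋊[φ] H) = Fintype.card (ZMod l × ZMod m) := by
    have e0 : (K ⋊[φ] H) ≃ K × H :=
      ⟨fun g => (g.left, g.right), fun p => ⟨p.1, p.2⟩, fun _ => rfl, fun _ => rfl⟩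
    rw [Fintype.card_congr e0]
    simp [hcardK, hcardH, ZMod.card, mul_comm]
  have hψbij : Function.Bijective ψ :=
    (Fintype.bijective_iff_injective_and_card _).mpr ⟨hψinj, hcardG.symm⟩
  -- key group identity and membership characterization
  have hkey : ∀ a c : ZMod l, ∀ b d : ZMod m, ψ (c, d) * (ψ (a, b))⁻¹ =
      inr (powZ h (c - a)) * inl (φ (powZ h a) (powZ k (d - b))) := by
    intro a c b d
    simp only [hψdef]
    have hh1 : powZ h (c - a) * powZ h a = powZ h c := by
      rw [← powZ_add hhord, sub_add_cancel]
    have hk1 : powZ k (d - b) * powZ k b = powZ k d := by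
      rw [← powZ_add hkord, sub_add_cancel]
    ext
    · simp only [SemidirectProduct.mul_left, SemidirectProduct.mul_right,
        SemidirectProduct.inv_left, SemidirectProduct.inv_right, SemidirectProduct.left_inl,
        SemidirectProduct.right_inl, SemidirectProduct.left_inr, SemidirectProduct.right_inr,
        map_one, map_mul, map_inv, mul_one, one_mul, inv_one, MulAut.one_apply]
      have e1 : (φ (powZ h a))⁻¹ ((φ (powZ h a)) (powZ k b)) = powZ k b := by
        simp [MulAut.inv_def]
      have e2 : powZ k d * (powZ k b)⁻¹ = powZ k (d - b) := by
        rw [← hk1, mul_inv_cancel_right]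
      rw [e1, ← map_inv, ← map_mul, e2, ← hh1, map_mul, MulAut.mul_apply]
    · simp only [SemidirectProduct.mul_left, SemidirectProduct.mul_right,
        SemidirectProduct.inv_left, SemidirectProduct.inv_right, SemidirectProduct.left_inl,
        SemidirectProduct.right_inl, SemidirectProduct.left_inr, SemidirectProduct.right_inr,
        map_one, map_mul, map_inv, mul_one, one_mul, inv_one, MulAut.one_apply]
      rw [← hh1, mul_inv_cancel_right]
  have hmem : ∀ a c : ZMod l, ∀ b d : ZMod m, (ψ (c, d) * (ψ (a, b))⁻¹ ∈ S) ↔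
      φ (powZ h a) (powZ k (d - b)) ∈ St (zmodToFin (c - a)) := by
    intro a c b d
    rw [hkey a c b d, hS]
    simp only [Set.mem_iUnion, Set.mem_image, Finset.mem_coe]
    constructor
    · rintro ⟨t, x, hx, heq⟩
      have heq2 : (inr (h ^ (t : ℕ)) : K ⋊[φ] H) * inl x =
          inr (powZ h (c - a)) * inl (φ (powZ h a) (powZ k (d - b))) := by
        rw [map_pow]; exact heq
      have hr : h ^ (t : ℕ) = powZ h (c - a) := by
        have h5 := congrArg SemidirectProduct.right heq2
        simp only [SemidirectProduct.mul_right, SemidirectProduct.right_inr,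
          SemidirectProduct.right_inl, mul_one] at h5
        exact h5
      have ht : (t : ℕ) = (c - a).val :=
        pow_injOn_Iio_orderOf (by rw [hhord]; exact t.isLt)
          (by rw [hhord]; exact ZMod.val_lt _) hr
      have htt : t = zmodToFin (c - a) := Fin.ext ht
      have hx2 : x = φ (powZ h a) (powZ k (d - b)) := by
        rw [hr] at heq2
        exact inl_injective (mul_left_cancel heq2)
      rw [← htt, ← hx2]
      exact hx
    · intro hx
      refine ⟨zmodToFin (c - a), _, hx, ?_⟩
      show (inr h : K ⋊[φ] H) ^ ((c - a).val) * inl (φ (powZ h a) (powZ k (d - b))) = _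
      rw [← map_pow]
      rfl
  -- reindex the matrix
  set e' : (K ⋊[φ] H) ≃ (ZMod l × ZMod m) := (Equiv.ofBijective ψ hψbij).symm with he'
  set A := Matrix.of fun x y : K ⋊[φ] H => S.indicator (fun _ => (1 : ℂ)) (y * x⁻¹) with hA
  set A' := Matrix.reindex e' e' A with hA'
  have hcp : A.charpoly = A'.charpoly := (Matrix.charpoly_reindex e' A).symm
  have hA'apply : ∀ p q, A' p q = S.indicator (fun _ => (1 : ℂ)) (ψ q * (ψ p)⁻¹) := by
    intro p q
    rw [hA']
    simp [hA, he']
  -- eigenvector equation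
  have hKbij : Function.Bijective (powZ (n := m) k) :=
    (Fintype.bijective_iff_injective_and_card _).mpr
      ⟨powZ_inj hkord, by simp [ZMod.card, hcardK]⟩
  have hinner : ∀ (a : ZMod l) (T : Finset K), (∀ x ∈ T, φ h x ∈ T) → ∀ g : ZMod m → ℂ,
      ∑ s ∈ Finset.univ.filter (fun s : ZMod m => φ (powZ h a) (powZ k s) ∈ T), g s =
        ∑ s ∈ Finset.univ.filter (fun s : ZMod m => powZ k s ∈ T), g s := by
    intro a T hT g
    have hT2 : ∀ x ∈ T, (φ (powZ h a)).toEquiv x ∈ T := by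
      intro x hx
      have h6 := mulaut_pow_mem (φ h) T hT a.val x hx
      rw [← map_pow] at h6
      exact h6
    have himg := image_eq_self (φ (powZ h a)).toEquiv T hT2
    exact sum_filter_zmod (φ (powZ h a)).toEquiv T himg (Equiv.ofBijective _ hKbij) g
  have heigen : ∀ χ : AddChar (ZMod l × ZMod m) ℂ,
      A'.mulVec ⇑χ = eig k St χ • ⇑χ := by
    intro χ
    funext p
    obtain ⟨a, b⟩ := p
    simp only [Pi.smul_apply, smul_eq_mul]
    have hsum : A'.mulVec ⇑χ (a, b) = ∑ c : ZMod l, ∑ d : ZMod m,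
        (if φ (powZ h a) (powZ k (d - b)) ∈ St (zmodToFin (c - a)) then (1 : ℂ) else 0) *
          χ (c, d) := by
      have e1 : A'.mulVec ⇑χ (a, b) = ∑ q : ZMod l × ZMod m, A' (a, b) q * χ q := by
        simp [Matrix.mulVec, dotProduct]
      rw [e1, Fintype.sum_prod_type]
      refine Finset.sum_congr rfl fun c _ => Finset.sum_congr rfl fun d _ => ?_
      rw [hA'apply, Set.indicator_apply]
      exact congrArg (· * χ (c, d)) (if_congr (hmem a c b d) rfl rfl)
    rw [hsum]
    calc
      ∑ c : ZMod l, ∑ d : ZMod m,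
          (if φ (powZ h a) (powZ k (d - b)) ∈ St (zmodToFin (c - a)) then (1 : ℂ) else 0) *
            χ (c, d)
        = ∑ t : ZMod l, ∑ d : ZMod m,
            (if φ (powZ h a) (powZ k (d - b)) ∈ St (zmodToFin ((a + t) - a)) then (1 : ℂ)
              else 0) * χ (a + t, d) :=
          (Fintype.sum_equiv (Equiv.addLeft a) _ _ (fun t => rfl)).symm
      _ = ∑ t : ZMod l, ∑ s : ZMod m,
            (if φ (powZ h a) (powZ k ((b + s) - b)) ∈ St (zmodToFin ((a + t) - a)) then (1 : ℂ)
              else 0) * χ (a + t, b + s) :=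
          Finset.sum_congr rfl fun t _ =>
            (Fintype.sum_equiv (Equiv.addLeft b) _ _ (fun s => rfl)).symm
      _ = ∑ t : ZMod l, ∑ s : ZMod m,
            (if φ (powZ h a) (powZ k s) ∈ St (zmodToFin t) then (1 : ℂ) else 0) *
              (χ (a, b) * (χ (t, 0) * χ (0, s))) := by
          refine Finset.sum_congr rfl fun t _ => Finset.sum_congr rfl fun s _ => ?_
          rw [add_sub_cancel_left, add_sub_cancel_left]
          congr 1
          have hps : ((a + t, b + s) : ZMod l × ZMod m) = (a, b) + ((t, 0) + (0, s)) := by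
            simp [Prod.ext_iff]
          rw [hps, AddChar.map_add_eq_mul, AddChar.map_add_eq_mul]
      _ = ∑ t : ZMod l, χ (a, b) * (χ (t, 0) *
            ∑ s ∈ Finset.univ.filter
              (fun s : ZMod m => φ (powZ h a) (powZ k s) ∈ St (zmodToFin t)), χ (0, s)) := by
          refine Finset.sum_congr rfl fun t _ => ?_
          rw [Finset.sum_filter, Finset.mul_sum, Finset.mul_sum]
          refine Finset.sum_congr rfl fun s _ => ?_
          split_ifs <;> ring
      _ = ∑ t : ZMod l, χ (a, b) * (χ (t, 0) *
            ∑ s ∈ Finset.univ.filter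
              (fun s : ZMod m => powZ k s ∈ St (zmodToFin t)), χ (0, s)) := by
          refine Finset.sum_congr rfl fun t _ => ?_
          rw [hinner a (St (zmodToFin t)) (hSconj _) (fun s => χ (0, s))]
      _ = eig k St χ * χ (a, b) := by
          unfold eig
          rw [Finset.sum_mul]
          refine Finset.sum_congr rfl fun t _ => ?_
          ring
  -- diagonalization
  have hdiag : A'.charpoly = (Matrix.diagonal (fun χ : AddChar (ZMod l × ZMod m) ℂ =>
      eig k St χ)).charpoly := by
    have h1 : A' = LinearMap.toMatrix' (Matrix.toLin' A') := (LinearMap.toMatrix'_toLin' A').symm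
    conv_lhs => rw [h1, ← LinearMap.toMatrix_eq_toMatrix']
    rw [LinearMap.charpoly_toMatrix]
    rw [← LinearMap.charpoly_toMatrix (Matrix.toLin' A')
      (AddChar.complexBasis (ZMod l × ZMod m))]
    congr 1
    ext χ χ'
    rw [LinearMap.toMatrix_apply]
    rw [AddChar.complexBasis_apply χ', Matrix.toLin'_apply, heigen χ']
    rw [← AddChar.complexBasis_apply χ', map_smul, Module.Basis.repr_self]
    rw [Finsupp.smul_apply, Finsupp.single_apply, Matrix.diagonal_apply]
    by_cases hcc : χ = χ'
    · subst hcc; simp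
    · simp [hcc, Ne.symm hcc]
  rw [hcp, hdiag, charpoly_diagonal]
  -- reindex the product over characters
  have hchibij : Function.Bijective (chi l m) :=
    (Fintype.bijective_iff_injective_and_card _).mpr
      ⟨chi_injective l m, by simp [AddChar.card_eq]⟩
  rw [← Fintype.prod_bijective (chi l m) hchibij
    (fun p => (X - C (eig k St (chi l m p)))) (fun χ => (X - C (eig k St χ))) (fun p => rfl)]
  rw [Fintype.prod_prod_type]
  rw [prod_zmod_range (fun u => ∏ v : ZMod m, (X - C (eig k St (chi l m (u, v)))))]
  refine Finset.prod_congr rfl fun u hu => ?_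
  rw [prod_zmod_range (fun v => (X - C (eig k St (chi l m (u, v)))))]
  refine Finset.prod_congr rfl fun v hv => ?_
  congr 1
  congr 1
  -- eigenvalue evaluation
  unfold eig
  rw [sum_zmod_fin (fun t : ZMod l => chi l m ((u : ZMod l), (v : ZMod m)) (t, 0) *
    ∑ s ∈ Finset.univ.filter (fun s : ZMod m => powZ k s ∈ St (zmodToFin t)), chi l m
      ((u : ZMod l), (v : ZMod m)) (0, s))]
  refine Finset.sum_congr rfl fun t _ => ?_
  have htfin : zmodToFin (((t : ℕ) : ZMod l)) = t := Fin.ext (ZMod.val_cast_of_lt t.isLt)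
  rw [htfin]
  congr 1
  · -- character value at (t, 0)
    rw [chi_apply]
    simp only [AddChar.map_zero_eq_one, mul_one]
    exact zmod_nat_val u (t : ℕ)
  · -- inner sum
    refine (Finset.sum_nbij' (fun s : ℕ => ((s : ZMod m))) (fun s : ZMod m => s.val)
      ?_ ?_ ?_ ?_ ?_).symm
    · intro s hs
      simp only [Finset.mem_filter, Finset.mem_range, Finset.mem_univ, true_and] at hs ⊢
      have : powZ k ((s : ZMod m)) = k ^ s := by
        show k ^ ((s : ZMod m)).val = k ^ s
        rw [ZMod.val_natCast, ← hkord, pow_mod_orderOf]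
      rw [this]
      exact hs.2
    · intro s hs
      simp only [Finset.mem_filter, Finset.mem_univ, true_and] at hs
      simp only [Finset.mem_filter, Finset.mem_range]
      refine ⟨ZMod.val_lt s, ?_⟩
      have : k ^ s.val = powZ k s := rfl
      rw [this]
      exact hs
    · intro s hs
      simp only [Finset.mem_filter, Finset.mem_range] at hs
      exact ZMod.val_cast_of_lt hs.1
    · intro s _
      exact ZMod.natCast_zmod_val s
    · intro s _
      rw [chi_apply]
      simp only [AddChar.map_zero_eq_one, one_mul]
      exact (zmod_nat_val v s).symm
end
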